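/- Fix t ≠ 0 real and n ∈ ℤ² with n ≠ 0, and let α ≥ 3/4. Define for N ∈ ℕ the quantity E_N = Σ_{k ∈ ℤ², |k| ≤ N, |n+k| ≤ N} ⟨n+k⟩^{-(2-2α)} ⟨k⟩^{-(2-2α)} · 2 sin(t (n·k))² / |n·k|² (with the convention that the factor equals 2t² when n·k = 0). Then E_N → ∞ as N → ∞. -/

import Mathlib

open Filter

set_option maxHeartbeats 1000000

private lemma harmonic_tendsto_aux :
    Tendsto (fun K : ℕ => ∑ m ∈ Finset.Icc 1 K, (1 : ℝ) / m) atTop atTop := by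
  have h := Real.tendsto_sum_range_one_div_nat_succ_atTop
  have heq : ∀ K : ℕ, (∑ m ∈ Finset.Icc 1 K, (1 : ℝ) / m)
      = ∑ i ∈ Finset.range K, (1 : ℝ) / (i + 1) := by
    intro K
    rw [show Finset.Icc 1 K = Finset.Ico 1 (K + 1) by rw [Finset.Ico_add_one_right_eq_Icc],
      Finset.sum_Ico_eq_sum_range]
    simp [add_comm]
  simp only [heq]
  exact h

private lemma int_abs_le_of_sq_le_sq {a N : ℤ} (h : a ^ 2 ≤ N ^ 2) (hN : 0 ≤ N) :
    -N ≤ a ∧ a ≤ N := by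
  constructor <;> nlinarith [sq_nonneg (a + N), sq_nonneg (a - N)]

private lemma nat_div_tendsto_atTop {d : ℕ} (hd : 0 < d) :
    Tendsto (fun N : ℕ => N / d) atTop atTop := by
  rw [tendsto_atTop]
  intro b
  filter_upwards [eventually_ge_atTop (b * d)] with N hN
  exact (Nat.le_div_iff_mul_le hd).2 hN

/-- divergence of the second moment of the Fourier coefficients of the
Picard second iterate when `α ≥ 3/4`.  Here
`E_N = Σ_{|k| ≤ N, |n+k| ≤ N} ⟨n+k⟩^{-(2-2α)} ⟨k⟩^{-(2-2α)} · 2 sin(t(n·k))²/(n·k)²`,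
with the factor equal to `2t²` when `n·k = 0`. -/
theorem second_moment_divergence (t : ℝ) (ht : t ≠ 0) (n : ℤ × ℤ) (hn : n ≠ 0)
    (α : ℝ) (hα : 3 / 4 ≤ α) :
    Tendsto (fun N : ℕ =>
      ∑ k ∈ (Finset.Icc (-(N : ℤ), -(N : ℤ)) ((N : ℤ), (N : ℤ))).filter
          (fun k => k.1 ^ 2 + k.2 ^ 2 ≤ (N : ℤ) ^ 2 ∧
            (n.1 + k.1) ^ 2 + (n.2 + k.2) ^ 2 ≤ (N : ℤ) ^ 2),
        (1 + (((n.1 + k.1 : ℤ) : ℝ) ^ 2 + ((n.2 + k.2 : ℤ) : ℝ) ^ 2)) ^ (α - 1) *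
          (1 + ((k.1 : ℝ) ^ 2 + (k.2 : ℝ) ^ 2)) ^ (α - 1) *
          (if n.1 * k.1 + n.2 * k.2 = 0 then 2 * t ^ 2
            else 2 * Real.sin (t * ((n.1 * k.1 + n.2 * k.2 : ℤ) : ℝ)) ^ 2 /
              ((n.1 * k.1 + n.2 * k.2 : ℤ) : ℝ) ^ 2))
      atTop atTop := by
  classical
  -- the squared norm of n
  set c : ℤ := n.1 ^ 2 + n.2 ^ 2 with hc_def
  have hn' : n.1 ≠ 0 ∨ n.2 ≠ 0 := by
    by_contra h
    push_neg at h
    exact hn (Prod.ext h.1 h.2)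
  have hc1 : 1 ≤ c := by
    have h0 : 0 < c := by
      rcases hn' with h | h
      · have h1 : 0 < n.1 ^ 2 := (sq_nonneg _).lt_of_ne' (pow_ne_zero 2 h)
        nlinarith [sq_nonneg n.2]
      · have h1 : 0 < n.2 ^ 2 := (sq_nonneg _).lt_of_ne' (pow_ne_zero 2 h)
        nlinarith [sq_nonneg n.1]
    omega
  set cr : ℝ := (c : ℝ) with hcr_def
  have hcr1 : (1 : ℝ) ≤ cr := by rw [hcr_def]; exact_mod_cast hc1
  have hcr0 : (0 : ℝ) < cr := lt_of_lt_of_le one_pos hcr1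
  set d : ℕ := (2 * c).toNat with hd_def
  have hd0 : 0 < d := by
    rw [hd_def]
    omega
  have hdc : (d : ℤ) = 2 * c := Int.toNat_of_nonneg (by omega)
  -- the comparison (harmonic-like) lower bound
  have hg : Tendsto (fun N : ℕ =>
      (t ^ 2 / Real.sqrt cr) * ∑ m ∈ Finset.Icc 1 (N / d), (1 : ℝ) / m) atTop atTop := by
    have ha : 0 < t ^ 2 / Real.sqrt cr := by positivity
    exact (harmonic_tendsto_aux.comp (nat_div_tendsto_atTop hd0)).const_mul_atTop ha
  refine tendsto_atTop_mono ?_ hg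
  intro N
  -- the map m ↦ m • (-n.2, n.1)
  set f : ℕ → ℤ × ℤ := fun m => (-(m : ℤ) * n.2, (m : ℤ) * n.1) with hf_def
  set M : ℕ := N / d with hM_def
  -- general facts for each m in Icc 1 M
  have hkey : ∀ m ∈ Finset.Icc 1 M, 2 * c * (m : ℤ) ^ 2 ≤ (N : ℤ) ^ 2 := by
    intro m hm
    rw [Finset.mem_Icc] at hm
    have h1 : m * d ≤ N := (Nat.le_div_iff_mul_le hd0).1 hm.2
    have h2 : ((m : ℤ) * d) ^ 2 ≤ (N : ℤ) ^ 2 := by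
      have hle : (m : ℤ) * d ≤ N := by exact_mod_cast h1
      have h0 : (0 : ℤ) ≤ (m : ℤ) * d := by positivity
      nlinarith
    rw [hdc] at h2
    have hm1 : (1 : ℤ) ≤ (m : ℤ) := by exact_mod_cast hm.1
    nlinarith [sq_nonneg (m : ℤ)]
  -- membership of f m in the index set
  set S : Finset (ℤ × ℤ) := (Finset.Icc (-(N : ℤ), -(N : ℤ)) ((N : ℤ), (N : ℤ))).filter
      (fun k => k.1 ^ 2 + k.2 ^ 2 ≤ (N : ℤ) ^ 2 ∧
        (n.1 + k.1) ^ 2 + (n.2 + k.2) ^ 2 ≤ (N : ℤ) ^ 2) with hS_def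
  have hmem : ∀ m ∈ Finset.Icc 1 M, f m ∈ S := by
    intro m hm
    have hk := hkey m hm
    rw [Finset.mem_Icc] at hm
    have hm1 : (1 : ℤ) ≤ (m : ℤ) := by exact_mod_cast hm.1
    have hsq1 : ((m : ℤ) * n.2) ^ 2 ≤ (N : ℤ) ^ 2 := by nlinarith [sq_nonneg ((m:ℤ) * n.1)]
    have hsq2 : ((m : ℤ) * n.1) ^ 2 ≤ (N : ℤ) ^ 2 := by nlinarith [sq_nonneg ((m:ℤ) * n.2)]
    have hN0 : (0 : ℤ) ≤ (N : ℤ) := Int.ofNat_nonneg N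
    obtain ⟨hb1, hb2⟩ := int_abs_le_of_sq_le_sq hsq1 hN0
    obtain ⟨hb3, hb4⟩ := int_abs_le_of_sq_le_sq hsq2 hN0
    rw [hS_def, Finset.mem_filter, Finset.mem_Icc]
    refine ⟨⟨⟨?_, ?_⟩, ⟨?_, ?_⟩⟩, ?_, ?_⟩
    · show -(N : ℤ) ≤ -(m : ℤ) * n.2; linarith
    · show -(N : ℤ) ≤ (m : ℤ) * n.1; exact hb3
    · show -(m : ℤ) * n.2 ≤ (N : ℤ); linarith
    · exact hb4
    · show (-(m : ℤ) * n.2) ^ 2 + ((m : ℤ) * n.1) ^ 2 ≤ (N : ℤ) ^ 2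
      have heq : (-(m : ℤ) * n.2) ^ 2 + ((m : ℤ) * n.1) ^ 2 = c * (m : ℤ) ^ 2 := by
        rw [hc_def]; ring
      rw [heq]
      nlinarith [sq_nonneg (m : ℤ)]
    · show (n.1 + -(m : ℤ) * n.2) ^ 2 + (n.2 + (m : ℤ) * n.1) ^ 2 ≤ (N : ℤ) ^ 2
      have heq : (n.1 + -(m : ℤ) * n.2) ^ 2 + (n.2 + (m : ℤ) * n.1) ^ 2
          = c * (1 + (m : ℤ) ^ 2) := by rw [hc_def]; ring
      rw [heq]
      have hm2 : (1 : ℤ) ≤ (m : ℤ) ^ 2 := by nlinarith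
      have hce : c ≤ c * (m : ℤ) ^ 2 := le_mul_of_one_le_right (by linarith) hm2
      nlinarith
  -- injectivity
  have hinj : ∀ a ∈ Finset.Icc 1 M, ∀ b ∈ Finset.Icc 1 M, f a = f b → a = b := by
    intro a _ b _ hab
    rw [hf_def, Prod.mk.injEq] at hab
    rcases hn' with h | h
    · have : (a : ℤ) * n.1 = (b : ℤ) * n.1 := hab.2
      exact_mod_cast mul_right_cancel₀ h this
    · have : -(a : ℤ) * n.2 = -(b : ℤ) * n.2 := hab.1
      have : (a : ℤ) = (b : ℤ) := by
        have h2 := mul_right_cancel₀ h this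
        linarith [neg_inj.mp h2]
      exact_mod_cast this
  -- nonnegativity of the summand
  set F : ℤ × ℤ → ℝ := fun k =>
      (1 + (((n.1 + k.1 : ℤ) : ℝ) ^ 2 + ((n.2 + k.2 : ℤ) : ℝ) ^ 2)) ^ (α - 1) *
        (1 + ((k.1 : ℝ) ^ 2 + (k.2 : ℝ) ^ 2)) ^ (α - 1) *
        (if n.1 * k.1 + n.2 * k.2 = 0 then 2 * t ^ 2
          else 2 * Real.sin (t * ((n.1 * k.1 + n.2 * k.2 : ℤ) : ℝ)) ^ 2 /
            ((n.1 * k.1 + n.2 * k.2 : ℤ) : ℝ) ^ 2) with hF_def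
  have hF0 : ∀ k : ℤ × ℤ, 0 ≤ F k := by
    intro k
    rw [hF_def]
    have h1 : (0:ℝ) < (1 + (((n.1 + k.1 : ℤ) : ℝ) ^ 2 + ((n.2 + k.2 : ℤ) : ℝ) ^ 2)) ^ (α - 1) := by
      apply Real.rpow_pos_of_pos; positivity
    have h2 : (0:ℝ) < (1 + ((k.1 : ℝ) ^ 2 + (k.2 : ℝ) ^ 2)) ^ (α - 1) := by
      apply Real.rpow_pos_of_pos; positivity
    have h3 : (0:ℝ) ≤ (if n.1 * k.1 + n.2 * k.2 = 0 then 2 * t ^ 2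
        else 2 * Real.sin (t * ((n.1 * k.1 + n.2 * k.2 : ℤ) : ℝ)) ^ 2 /
          ((n.1 * k.1 + n.2 * k.2 : ℤ) : ℝ) ^ 2) := by
      split <;> positivity
    positivity
  -- termwise lower bound
  have hterm : ∀ m ∈ Finset.Icc 1 M, t ^ 2 / Real.sqrt cr * (1 / m) ≤ F (f m) := by
    intro m hm
    rw [Finset.mem_Icc] at hm
    have hm1 : (1 : ℝ) ≤ (m : ℝ) := by exact_mod_cast hm.1
    have hm0 : (0 : ℝ) < (m : ℝ) := lt_of_lt_of_le one_pos hm1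
    rw [hF_def]
    beta_reduce
    have hip : n.1 * (f m).1 + n.2 * (f m).2 = 0 := by rw [hf_def]; ring
    rw [if_pos hip]
    have e1 : (1 : ℝ) + (((n.1 + (f m).1 : ℤ) : ℝ) ^ 2 + ((n.2 + (f m).2 : ℤ) : ℝ) ^ 2)
        = 1 + cr * (1 + (m : ℝ) ^ 2) := by
      rw [hf_def, hcr_def, hc_def]
      push_cast
      ring
    have e2 : (1 : ℝ) + (((f m).1 : ℝ) ^ 2 + ((f m).2 : ℝ) ^ 2)
        = 1 + cr * (m : ℝ) ^ 2 := by
      rw [hf_def, hcr_def, hc_def]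
      push_cast
      ring
    rw [e1, e2]
    set B : ℝ := 4 * cr * (m : ℝ) ^ 2 with hB_def
    have hB0 : 0 < B := by positivity
    have hm2 : (1 : ℝ) ≤ (m : ℝ) ^ 2 := by nlinarith
    have hA : cr ≤ cr * (m : ℝ) ^ 2 := le_mul_of_one_le_right (by linarith) hm2
    have hB1 : (1 : ℝ) ≤ cr * (m : ℝ) ^ 2 := by nlinarith
    have hx1 : (1 : ℝ) ≤ 1 + cr * (1 + (m : ℝ) ^ 2) := by nlinarith
    have hx2 : (1 : ℝ) ≤ 1 + cr * (m : ℝ) ^ 2 := by nlinarith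
    have hxB1 : 1 + cr * (1 + (m : ℝ) ^ 2) ≤ B := by rw [hB_def]; nlinarith
    have hxB2 : 1 + cr * (m : ℝ) ^ 2 ≤ B := by rw [hB_def]; nlinarith
    have hexp : (-(4 : ℝ)⁻¹) ≤ α - 1 := by linarith
    have key : ∀ x : ℝ, 1 ≤ x → x ≤ B → B ^ (-(4:ℝ)⁻¹) ≤ x ^ (α - 1) := by
      intro x h1x hxB
      calc B ^ (-(4:ℝ)⁻¹) ≤ x ^ (-(4:ℝ)⁻¹) :=
            Real.rpow_le_rpow_of_nonpos (lt_of_lt_of_le one_pos h1x) hxB (by norm_num)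
        _ ≤ x ^ (α - 1) := Real.rpow_le_rpow_of_exponent_le h1x hexp
    have k1 := key _ hx1 hxB1
    have k2 := key _ hx2 hxB2
    have hBpow : B ^ (-(4:ℝ)⁻¹) * B ^ (-(4:ℝ)⁻¹) = (2 * Real.sqrt cr * m)⁻¹ := by
      rw [← Real.rpow_add hB0]
      have h12 : (-(4:ℝ)⁻¹) + (-(4:ℝ)⁻¹) = -(2:ℝ)⁻¹ := by norm_num
      rw [h12, Real.rpow_neg hB0.le]
      congr 1
      rw [show ((2:ℝ)⁻¹) = 1/2 by norm_num, ← Real.sqrt_eq_rpow, hB_def]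
      rw [show (4 : ℝ) * cr * (m:ℝ)^2 = (2 * Real.sqrt cr * m)^2 by
        rw [mul_pow, mul_pow, Real.sq_sqrt hcr0.le]; ring]
      exact Real.sqrt_sq (by positivity)
    have hBpos : 0 < B ^ (-(4:ℝ)⁻¹) := Real.rpow_pos_of_pos hB0 _
    have h2t : (0 : ℝ) < 2 * t ^ 2 := by positivity
    calc t ^ 2 / Real.sqrt cr * (1 / m)
        = (B ^ (-(4:ℝ)⁻¹) * B ^ (-(4:ℝ)⁻¹)) * (2 * t ^ 2) := by
          rw [hBpow]; field_simp
      _ ≤ (1 + cr * (1 + (m : ℝ) ^ 2)) ^ (α - 1) * ((1 + cr * (m : ℝ) ^ 2) ^ (α - 1))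
            * (2 * t ^ 2) := by
          apply mul_le_mul_of_nonneg_right _ h2t.le
          exact mul_le_mul k1 k2 hBpos.le (le_trans hBpos.le k1)
  -- assemble
  have hsub : (Finset.Icc 1 M).image f ⊆ S := by
    intro k hk
    rw [Finset.mem_image] at hk
    obtain ⟨m, hm, rfl⟩ := hk
    exact hmem m hm
  calc t ^ 2 / Real.sqrt cr * ∑ m ∈ Finset.Icc 1 M, (1 : ℝ) / m
      = ∑ m ∈ Finset.Icc 1 M, t ^ 2 / Real.sqrt cr * (1 / m) := by
        rw [Finset.mul_sum]
    _ ≤ ∑ m ∈ Finset.Icc 1 M, F (f m) := Finset.sum_le_sum hterm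
    _ = ∑ k ∈ (Finset.Icc 1 M).image f, F k := (Finset.sum_image hinj).symm
    _ ≤ ∑ k ∈ S, F k := Finset.sum_le_sum_of_subset_of_nonneg hsub (fun k _ _ => hF0 k)
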